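/- The stable-1/2 densities form a convolution semigroup: for all reals x > 0, y > 0 and a > 0, ∫₀^a q_x(s)·q_y(a−s) ds = q_{x+y}(a). -/

import Mathlib

open Real

/-- The stable-1/2 density with parameter `x`: `q_x(a) = (x/√(2πa³)) e^{−x²/(2a)}`. -/
noncomputable def stableHalfDensity (x a : ℝ) : ℝ :=
  x / Real.sqrt (2 * Real.pi * a ^ 3) * Real.exp (-x ^ 2 / (2 * a))

section Aux

open MeasureTheory Set

variable {x y a : ℝ}

lemma psi_deriv (hx : 0 < x) {τ : ℝ} (hτ : 0 < τ) :
    HasDerivAt (fun t : ℝ => y * t - x / t) (y + x / τ ^ 2) τ := by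
  have h1 : HasDerivAt (fun t : ℝ => y * t) y τ := by
    simpa using (hasDerivAt_id τ).const_mul y
  have h2 : HasDerivAt (fun t : ℝ => x / t) (-(x / τ ^ 2)) τ := by
    have := (hasDerivAt_inv hτ.ne').const_mul x
    simpa [div_eq_mul_inv, neg_div, mul_comm] using this
  have := h1.sub h2; rwa [sub_neg_eq_add] at this

lemma psi_inj (hx : 0 < x) (hy : 0 < y) :
    InjOn (fun τ : ℝ => y * τ - x / τ) (Ioi 0) := by
  intro t1 h1 t2 h2 he
  simp only [mem_Ioi] at h1 h2
  simp only at he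
  have h1' : t1 ≠ 0 := h1.ne'
  have h2' : t2 ≠ 0 := h2.ne'
  have key : (t1 - t2) * (y * t1 * t2 + x) = 0 := by
    field_simp at he
    nlinarith [he]
  have hpos : y * t1 * t2 + x > 0 := by positivity
  have := mul_eq_zero.1 key
  rcases this with h | h
  · linarith
  · linarith

lemma psi_image (hx : 0 < x) (hy : 0 < y) :
    (fun τ : ℝ => y * τ - x / τ) '' Ioi 0 = univ := by
  apply eq_univ_of_forall
  intro r
  set D := Real.sqrt (r ^ 2 + 4 * x * y) with hD
  have hD2 : D ^ 2 = r ^ 2 + 4 * x * y := Real.sq_sqrt (by positivity)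
  have hDr : -r < D := by
    rcases le_or_gt r 0 with h | h
    · have : |r| < D := by
        rw [← Real.sqrt_sq_eq_abs]
        exact Real.sqrt_lt_sqrt (sq_nonneg r) (by nlinarith)
      calc -r ≤ |r| := neg_le_abs r
        _ < D := this
    · have : (0:ℝ) ≤ D := Real.sqrt_nonneg _
      linarith
  refine ⟨(r + D) / (2 * y), ?_, ?_⟩
  · simp only [mem_Ioi]
    have : 0 < r + D := by linarith
    positivity
  · have hrD : 0 < r + D := by linarith
    have hrD2 : r + D ≠ 0 := hrD.ne'
    have hne : (r + D) / (2 * y) ≠ 0 := by positivity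
    field_simp [hrD2]
    nlinarith [hD2]

lemma cs_abs_eq (hx : 0 < x) (hy : 0 < y) {τ : ℝ} (hτ : τ ∈ Ioi (0:ℝ)) :
    |y + x / τ ^ 2| = y + x / τ ^ 2 := by
  have : (0:ℝ) < τ := hτ
  exact abs_of_pos (by positivity)

lemma cs_int (hx : 0 < x) (hy : 0 < y) (ha : 0 < a) :
    ∫ τ in Ioi (0:ℝ), (y + x / τ ^ 2) * Real.exp (-(1/(2*a)) * (y * τ - x / τ) ^ 2)
      = Real.sqrt (2 * π * a) := by
  have hderiv : ∀ τ ∈ Ioi (0:ℝ),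
      HasDerivWithinAt (fun t : ℝ => y * t - x / t) (y + x / τ ^ 2) (Ioi 0) τ :=
    fun τ hτ => (psi_deriv hx hτ).hasDerivWithinAt
  have key := integral_image_eq_integral_abs_deriv_smul measurableSet_Ioi hderiv
      (psi_inj hx hy) (fun r => Real.exp (-(1/(2*a)) * r ^ 2))
  rw [psi_image hx hy, setIntegral_univ] at key
  have hg : (∫ r : ℝ, Real.exp (-(1/(2*a)) * r ^ 2)) = Real.sqrt (2 * π * a) := by
    rw [integral_gaussian]
    congr 1
    field_simp
  rw [hg] at key
  rw [key]
  apply setIntegral_congr_fun measurableSet_Ioi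
  intro τ hτ
  simp only [smul_eq_mul]
  rw [cs_abs_eq hx hy hτ]

lemma H_integrable (hx : 0 < x) (hy : 0 < y) (ha : 0 < a) :
    IntegrableOn (fun τ : ℝ => (y + x / τ ^ 2) * Real.exp (-(1/(2*a)) * (y * τ - x / τ) ^ 2))
      (Ioi 0) := by
  have hderiv : ∀ τ ∈ Ioi (0:ℝ),
      HasDerivWithinAt (fun t : ℝ => y * t - x / t) (y + x / τ ^ 2) (Ioi 0) τ :=
    fun τ hτ => (psi_deriv hx hτ).hasDerivWithinAt
  have key := integrableOn_image_iff_integrableOn_abs_deriv_smul measurableSet_Ioi hderiv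
      (psi_inj hx hy) (fun r => Real.exp (-(1/(2*a)) * r ^ 2))
  rw [psi_image hx hy] at key
  have hI : IntegrableOn (fun r : ℝ => Real.exp (-(1/(2*a)) * r ^ 2)) univ := by
    rw [integrableOn_univ]
    exact integrable_exp_neg_mul_sq (by positivity)
  have := key.1 hI
  apply this.congr_fun ?_ measurableSet_Ioi
  intro τ hτ
  simp only [smul_eq_mul]
  rw [cs_abs_eq hx hy hτ]

lemma G_meas : AEStronglyMeasurable
    (fun τ : ℝ => Real.exp (-(1/(2*a)) * (y * τ - x / τ) ^ 2))
    (MeasureTheory.volume.restrict (Ioi 0)) := by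
  apply Measurable.aestronglyMeasurable
  fun_prop

lemma G_integrable (hx : 0 < x) (hy : 0 < y) (ha : 0 < a) :
    IntegrableOn (fun τ : ℝ => Real.exp (-(1/(2*a)) * (y * τ - x / τ) ^ 2)) (Ioi 0) := by
  apply Integrable.mono' ((H_integrable hx hy ha).const_mul (1/y)) G_meas
  rw [ae_restrict_iff' measurableSet_Ioi]
  filter_upwards with τ hτ
  have hτ' : (0:ℝ) < τ := hτ
  have hG : (0:ℝ) < Real.exp (-(1/(2*a)) * (y * τ - x / τ) ^ 2) := Real.exp_pos _
  rw [Real.norm_eq_abs, abs_of_pos hG]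
  have h1 : (0:ℝ) ≤ x / τ ^ 2 := by positivity
  have h2 : (1:ℝ) ≤ 1/y * (y + x / τ ^ 2) := by
    rw [one_div, inv_mul_eq_div, le_div_iff₀ hy]
    linarith
  nlinarith

lemma B_meas : AEStronglyMeasurable
    (fun τ : ℝ => 1 / τ ^ 2 * Real.exp (-(1/(2*a)) * (y * τ - x / τ) ^ 2))
    (MeasureTheory.volume.restrict (Ioi 0)) := by
  apply Measurable.aestronglyMeasurable
  fun_prop

lemma B_integrable (hx : 0 < x) (hy : 0 < y) (ha : 0 < a) :
    IntegrableOn (fun τ : ℝ => 1 / τ ^ 2 * Real.exp (-(1/(2*a)) * (y * τ - x / τ) ^ 2))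
      (Ioi 0) := by
  apply Integrable.mono' ((H_integrable hx hy ha).const_mul (1/x)) B_meas
  rw [ae_restrict_iff' measurableSet_Ioi]
  filter_upwards with τ hτ
  have hτ' : (0:ℝ) < τ := hτ
  have hG : (0:ℝ) < Real.exp (-(1/(2*a)) * (y * τ - x / τ) ^ 2) := Real.exp_pos _
  have h0 : (0:ℝ) < 1 / τ ^ 2 := by positivity
  rw [Real.norm_eq_abs, abs_of_pos (by positivity)]
  have h2 : 1 / τ ^ 2 ≤ 1/x * (y + x / τ ^ 2) := by
    rw [one_div x, inv_mul_eq_div, le_div_iff₀ hx]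
    have : x * (1 / τ ^ 2) = x / τ ^ 2 := by ring
    nlinarith [mul_nonneg hy.le (sq_nonneg τ)]
  nlinarith

lemma invol_deriv (hx : 0 < x) (hy : 0 < y) {τ : ℝ} (hτ : 0 < τ) :
    HasDerivAt (fun t : ℝ => x / (y * t)) (-(x / (y * τ ^ 2))) τ := by
  have := (hasDerivAt_inv hτ.ne').const_mul (x / y)
  have hf : (fun t : ℝ => x / (y * t)) = fun t => x / y * t⁻¹ := by funext t; ring
  rw [hf]
  exact this.congr_deriv (by ring)

lemma invol_image (hx : 0 < x) (hy : 0 < y) :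
    (fun τ : ℝ => x / (y * τ)) '' Ioi 0 = Ioi 0 := by
  apply Subset.antisymm
  · rintro _ ⟨τ, hτ, rfl⟩
    have : (0:ℝ) < τ := hτ
    exact mem_Ioi.2 (by positivity)
  · intro σ hσ
    have hσ' : (0:ℝ) < σ := hσ
    refine ⟨x / (y * σ), mem_Ioi.2 (by positivity), ?_⟩
    simp only
    field_simp

lemma invol_inj (hx : 0 < x) (hy : 0 < y) :
    InjOn (fun τ : ℝ => x / (y * τ)) (Ioi 0) := by
  intro t1 h1 t2 h2 he
  have h1' : (0:ℝ) < t1 := h1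
  have h2' : (0:ℝ) < t2 := h2
  simp only at he
  field_simp at he
  exact he.symm

lemma A_eq_B (hx : 0 < x) (hy : 0 < y) (ha : 0 < a) :
    ∫ τ in Ioi (0:ℝ), Real.exp (-(1/(2*a)) * (y * τ - x / τ) ^ 2)
      = (x / y) * ∫ τ in Ioi (0:ℝ), 1 / τ ^ 2 * Real.exp (-(1/(2*a)) * (y * τ - x / τ) ^ 2) := by
  have hderiv : ∀ τ ∈ Ioi (0:ℝ),
      HasDerivWithinAt (fun t : ℝ => x / (y * t)) (-(x / (y * τ ^ 2))) (Ioi 0) τ :=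
    fun τ hτ => (invol_deriv hx hy hτ).hasDerivWithinAt
  have key := integral_image_eq_integral_abs_deriv_smul measurableSet_Ioi hderiv
      (invol_inj hx hy) (fun r => Real.exp (-(1/(2*a)) * (y * r - x / r) ^ 2))
  rw [invol_image hx hy] at key
  rw [key, ← integral_const_mul]
  apply setIntegral_congr_fun measurableSet_Ioi
  intro τ hτ
  have hτ' : (0:ℝ) < τ := hτ
  simp only [smul_eq_mul]
  have habs : |(-(x / (y * τ ^ 2)))| = x / (y * τ ^ 2) := by
    rw [abs_neg]; exact abs_of_pos (by positivity)
  rw [habs]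
  have harg : y * (x / (y * τ)) - x / (x / (y * τ)) = -(y * τ - x / τ) := by
    field_simp
    ring
  rw [harg]
  have : (-(y * τ - x / τ)) ^ 2 = (y * τ - x / τ) ^ 2 := by ring
  rw [this]
  field_simp

lemma B_val (hx : 0 < x) (hy : 0 < y) (ha : 0 < a) :
    ∫ τ in Ioi (0:ℝ), 1 / τ ^ 2 * Real.exp (-(1/(2*a)) * (y * τ - x / τ) ^ 2)
      = Real.sqrt (2 * π * a) / (2 * x) := by
  set B := ∫ τ in Ioi (0:ℝ), 1 / τ ^ 2 * Real.exp (-(1/(2*a)) * (y * τ - x / τ) ^ 2) with hB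
  set A := ∫ τ in Ioi (0:ℝ), Real.exp (-(1/(2*a)) * (y * τ - x / τ) ^ 2) with hA
  have hsplit : ∫ τ in Ioi (0:ℝ), (y + x / τ ^ 2) * Real.exp (-(1/(2*a)) * (y * τ - x / τ) ^ 2)
      = y * A + x * B := by
    have heq : ∀ τ ∈ Ioi (0:ℝ),
        (y + x / τ ^ 2) * Real.exp (-(1/(2*a)) * (y * τ - x / τ) ^ 2)
        = y * Real.exp (-(1/(2*a)) * (y * τ - x / τ) ^ 2)
          + x * (1 / τ ^ 2 * Real.exp (-(1/(2*a)) * (y * τ - x / τ) ^ 2)) := by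
      intro τ hτ
      have hτ' : (0:ℝ) < τ := hτ
      field_simp
    rw [setIntegral_congr_fun measurableSet_Ioi heq]
    rw [integral_add ((G_integrable hx hy ha).const_mul y) ((B_integrable hx hy ha).const_mul x)]
    rw [integral_const_mul, integral_const_mul]
  have hcs := cs_int hx hy ha (a := a)
  rw [hsplit] at hcs
  have hab := A_eq_B hx hy ha (a := a)
  rw [← hA, ← hB] at hab
  have hyx : y * (x / y * B) = x * B := by field_simp
  rw [hab, hyx] at hcs
  rw [eq_div_iff (by positivity : (2:ℝ) * x ≠ 0)]
  linarith

lemma A_val (hx : 0 < x) (hy : 0 < y) (ha : 0 < a) :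
    ∫ τ in Ioi (0:ℝ), Real.exp (-(1/(2*a)) * (y * τ - x / τ) ^ 2)
      = Real.sqrt (2 * π * a) / (2 * y) := by
  rw [A_eq_B hx hy ha, B_val hx hy ha]
  generalize Real.sqrt (2 * π * a) = S
  field_simp

lemma sqrt_cube {s : ℝ} (hs : 0 ≤ s) :
    Real.sqrt (2 * π * s ^ 3) = s * Real.sqrt (2 * π * s) := by
  rw [show 2 * π * s ^ 3 = s ^ 2 * (2 * π * s) by ring, Real.sqrt_mul (sq_nonneg s),
    Real.sqrt_sq hs]

lemma phi_deriv (ha : 0 < a) (τ : ℝ) :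
    HasDerivAt (fun t : ℝ => a * t ^ 2 / (1 + t ^ 2)) (2 * a * τ / (1 + τ ^ 2) ^ 2) τ := by
  have h1 : HasDerivAt (fun t : ℝ => a * t ^ 2) (a * (2 * τ)) τ := by
    simpa using ((hasDerivAt_pow 2 τ).const_mul a)
  have h2 : HasDerivAt (fun t : ℝ => 1 + t ^ 2) (2 * τ) τ := by
    simpa using ((hasDerivAt_pow 2 τ).const_add 1)
  have hne : (1 + τ ^ 2) ≠ 0 := by positivity
  have := h1.div h2 hne
  exact this.congr_deriv (by rw [div_left_inj' (by positivity)]; ring)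

lemma phi_inj (ha : 0 < a) : InjOn (fun τ : ℝ => a * τ ^ 2 / (1 + τ ^ 2)) (Ioi 0) := by
  intro t1 h1 t2 h2 he
  have h1' : (0:ℝ) < t1 := h1
  have h2' : (0:ℝ) < t2 := h2
  have d1 : (0:ℝ) < 1 + t1 ^ 2 := by positivity
  have d2 : (0:ℝ) < 1 + t2 ^ 2 := by positivity
  simp only at he
  rw [div_eq_div_iff d1.ne' d2.ne'] at he
  have hsq : (t1 - t2) * (t1 + t2) = 0 := by nlinarith [he]
  rcases mul_eq_zero.1 hsq with h | h
  · linarith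
  · linarith

lemma phi_image (ha : 0 < a) :
    (fun τ : ℝ => a * τ ^ 2 / (1 + τ ^ 2)) '' Ioi 0 = Ioo 0 a := by
  apply Subset.antisymm
  · rintro _ ⟨τ, hτ, rfl⟩
    have hτ' : (0:ℝ) < τ := hτ
    have d : (0:ℝ) < 1 + τ ^ 2 := by positivity
    constructor
    · positivity
    · rw [div_lt_iff₀ d]
      nlinarith
  · rintro s ⟨hs0, hsa⟩
    have hd : (0:ℝ) < a - s := by linarith
    refine ⟨Real.sqrt (s / (a - s)), mem_Ioi.2 (Real.sqrt_pos.2 (by positivity)), ?_⟩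
    simp only
    rw [Real.sq_sqrt (by positivity : (0:ℝ) ≤ s / (a - s))]
    field_simp
    ring

lemma phi_point (hx : 0 < x) (hy : 0 < y) (ha : 0 < a) {τ : ℝ} (hτ : 0 < τ) :
    |2 * a * τ / (1 + τ ^ 2) ^ 2| *
      (stableHalfDensity x (a * τ ^ 2 / (1 + τ ^ 2)) *
        stableHalfDensity y (a - a * τ ^ 2 / (1 + τ ^ 2)))
    = (x * y / (π * a ^ 2)) * Real.exp (-(x + y) ^ 2 / (2 * a)) *
        (Real.exp (-(1/(2*a)) * (y * τ - x / τ) ^ 2)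
          + 1 / τ ^ 2 * Real.exp (-(1/(2*a)) * (y * τ - x / τ) ^ 2)) := by
  have hd : (0:ℝ) < 1 + τ ^ 2 := by positivity
  obtain ⟨s, hs_def⟩ : ∃ s', s' = a * τ ^ 2 / (1 + τ ^ 2) := ⟨_, rfl⟩
  rw [← hs_def]
  have hs : (0:ℝ) < s := by rw [hs_def]; positivity
  have hsa : a - s = a / (1 + τ ^ 2) := by
    rw [hs_def]; field_simp; ring
  have hs' : (0:ℝ) < a - s := by rw [hsa]; positivity
  unfold stableHalfDensity
  rw [sqrt_cube hs.le, sqrt_cube hs'.le]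
  obtain ⟨R1, hR1⟩ : ∃ r, r = Real.sqrt (2 * π * s) := ⟨_, rfl⟩
  obtain ⟨R2, hR2⟩ : ∃ r, r = Real.sqrt (2 * π * (a - s)) := ⟨_, rfl⟩
  rw [← hR1, ← hR2]
  have hR1p : 0 < R1 := by rw [hR1]; exact Real.sqrt_pos.2 (by positivity)
  have hR2p : 0 < R2 := by rw [hR2]; exact Real.sqrt_pos.2 (by positivity)
  have hR12 : R1 * R2 = 2 * π * (a * τ / (1 + τ ^ 2)) := by
    rw [hR1, hR2, ← Real.sqrt_mul (by positivity)]
    rw [show 2 * π * s * (2 * π * (a - s)) = (2 * π * (a * τ / (1 + τ ^ 2))) ^ 2 by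
      rw [hsa, hs_def]; field_simp]
    exact Real.sqrt_sq (by positivity)
  have hexp : Real.exp (-x ^ 2 / (2 * s)) * Real.exp (-y ^ 2 / (2 * (a - s)))
      = Real.exp (-(x + y) ^ 2 / (2 * a)) * Real.exp (-(1/(2*a)) * (y * τ - x / τ) ^ 2) := by
    rw [← Real.exp_add, ← Real.exp_add]
    congr 1
    rw [hsa, hs_def]
    field_simp
    ring
  rw [abs_of_pos (by positivity : (0:ℝ) < 2 * a * τ / (1 + τ ^ 2) ^ 2)]
  calc 2 * a * τ / (1 + τ ^ 2) ^ 2 *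
        (x / (s * R1) * Real.exp (-x ^ 2 / (2 * s)) *
          (y / ((a - s) * R2) * Real.exp (-y ^ 2 / (2 * (a - s)))))
      = (2 * a * τ / (1 + τ ^ 2) ^ 2 * x * y / (s * (a - s)) / (R1 * R2)) *
          (Real.exp (-x ^ 2 / (2 * s)) * Real.exp (-y ^ 2 / (2 * (a - s)))) := by
        field_simp
    _ = (2 * a * τ / (1 + τ ^ 2) ^ 2 * x * y / (s * (a - s)) / (2 * π * (a * τ / (1 + τ ^ 2)))) *
          (Real.exp (-(x + y) ^ 2 / (2 * a)) * Real.exp (-(1/(2*a)) * (y * τ - x / τ) ^ 2)) := by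
        rw [hR12, hexp]
    _ = (x * y / (π * a ^ 2)) * Real.exp (-(x + y) ^ 2 / (2 * a)) *
        (Real.exp (-(1/(2*a)) * (y * τ - x / τ) ^ 2)
          + 1 / τ ^ 2 * Real.exp (-(1/(2*a)) * (y * τ - x / τ) ^ 2)) := by
        have hscal : 2 * a * τ / (1 + τ ^ 2) ^ 2 * x * y / (s * (a - s)) /
            (2 * π * (a * τ / (1 + τ ^ 2)))
            = x * y / (π * a ^ 2) * (1 + 1 / τ ^ 2) := by
          rw [hsa, hs_def]
          have hπ : (0:ℝ) < π := Real.pi_pos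
          field_simp
          ring
        rw [hscal]
        ring


end Aux

open MeasureTheory Set in
/-- The stable-1/2 densities form a convolution semigroup: for `x, y, a > 0`,
`∫₀^a q_x(s) q_y(a−s) ds = q_{x+y}(a)`. -/
theorem stableHalf_convolution_semigroup (x y a : ℝ) (hx : 0 < x) (hy : 0 < y) (ha : 0 < a) :
    ∫ s in (0 : ℝ)..a, stableHalfDensity x s * stableHalfDensity y (a - s)
      = stableHalfDensity (x + y) a := by
  rw [intervalIntegral.integral_of_le ha.le, integral_Ioc_eq_integral_Ioo]
  have hderiv : ∀ τ ∈ Ioi (0:ℝ),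
      HasDerivWithinAt (fun t : ℝ => a * t ^ 2 / (1 + t ^ 2))
        (2 * a * τ / (1 + τ ^ 2) ^ 2) (Ioi 0) τ :=
    fun τ _ => (phi_deriv ha τ).hasDerivWithinAt
  have key := integral_image_eq_integral_abs_deriv_smul measurableSet_Ioi hderiv (phi_inj ha)
      (fun s => stableHalfDensity x s * stableHalfDensity y (a - s))
  rw [phi_image ha] at key
  rw [key]
  have heq : ∀ τ ∈ Ioi (0:ℝ), |2 * a * τ / (1 + τ ^ 2) ^ 2| •
      (stableHalfDensity x (a * τ ^ 2 / (1 + τ ^ 2)) *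
        stableHalfDensity y (a - a * τ ^ 2 / (1 + τ ^ 2)))
      = (x * y / (π * a ^ 2)) * Real.exp (-(x + y) ^ 2 / (2 * a)) *
        (Real.exp (-(1/(2*a)) * (y * τ - x / τ) ^ 2)
          + 1 / τ ^ 2 * Real.exp (-(1/(2*a)) * (y * τ - x / τ) ^ 2)) := by
    intro τ hτ
    rw [smul_eq_mul]
    exact phi_point hx hy ha hτ
  rw [setIntegral_congr_fun measurableSet_Ioi heq]
  rw [integral_const_mul]
  rw [integral_add (G_integrable hx hy ha) (B_integrable hx hy ha)]
  rw [A_val hx hy ha, B_val hx hy ha]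
  unfold stableHalfDensity
  have hsq : Real.sqrt (2 * π * a) * Real.sqrt (2 * π * a ^ 3) = 2 * π * a ^ 2 := by
    rw [← Real.sqrt_mul (by positivity), show (2*π*a) * (2*π*a^3) = (2*π*a^2)^2 by ring]
    exact Real.sqrt_sq (by positivity)
  have h3p : (0:ℝ) < Real.sqrt (2 * π * a ^ 3) := Real.sqrt_pos.2 (by positivity)
  obtain ⟨S1, hS1d⟩ : ∃ r, r = Real.sqrt (2 * π * a) := ⟨_, rfl⟩
  obtain ⟨S3, hS3d⟩ : ∃ r, r = Real.sqrt (2 * π * (a ^ 3)) := ⟨_, rfl⟩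
  rw [← hS1d, ← hS3d]
  rw [← hS1d, ← hS3d] at hsq
  rw [← hS3d] at h3p
  have hπ : (0:ℝ) < π := Real.pi_pos
  have hS1 : S1 = 2 * π * a ^ 2 / S3 := by
    rw [eq_div_iff h3p.ne']; exact hsq
  rw [hS1]
  field_simp
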